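/- arXiv:1909.01690 — 2 statements merged into one kernel-verified Lean document; each statement's English description precedes it below -/
import Mathlib

section
/- Let X, Y be two-dimensional real normed spaces, T : X → Y linear with ‖T‖ = 1, and suppose M_T ∩ Ext(B_X) = {±x_1, ±x_2, ±x_3} with x_1, x_2, x_3 pairwise distinct up to sign. If T x_i is a smooth point of Y for each i = 1,2,3, then dim span J(T) = 3, i.e., T is 3-smooth. -/
open Module Set Filter Topology

section aux
variable {E F : Type*} [NormedAddCommGroup E] [NormedSpace ℝ E]
  [NormedAddCommGroup F] [NormedSpace ℝ F]

/-- norm attainment in finite dimensions -/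
lemma attain [FiniteDimensional ℝ E] [Nontrivial E] (A : E →L[ℝ] F) :
    ∃ v : E, ‖v‖ = 1 ∧ ‖A v‖ = ‖A‖ := by
  obtain ⟨v, hv, hmax⟩ := (isCompact_sphere (0:E) 1).exists_isMaxOn
    (NormedSpace.sphere_nonempty.mpr zero_le_one)
    (by fun_prop : ContinuousOn (fun x : E => ‖A x‖) (Metric.sphere 0 1))
  rw [mem_sphere_zero_iff_norm] at hv
  refine ⟨v, hv, le_antisymm (by simpa [hv] using A.le_opNorm v) ?_⟩
  refine A.opNorm_le_bound (norm_nonneg _) fun x => ?_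
  rcases eq_or_ne x 0 with rfl | hx
  · simp
  · have hxs : (‖x‖⁻¹ • x) ∈ Metric.sphere (0:E) 1 := by
      simp [norm_smul, inv_mul_cancel₀ (norm_ne_zero_iff.mpr hx)]
    have h1 : ‖A (‖x‖⁻¹ • x)‖ ≤ ‖A v‖ := hmax hxs
    rw [map_smul, norm_smul, norm_inv, norm_norm] at h1
    have hx0 : (0:ℝ) < ‖x‖ := norm_pos_iff.mpr hx
    calc ‖A x‖ = ‖x‖ * (‖x‖⁻¹ * ‖A x‖) := by field_simp
    _ ≤ ‖x‖ * ‖A v‖ := by nlinarith [h1]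
    _ = ‖A v‖ * ‖x‖ := by ring
end aux

section aux2
variable {E : Type*} [NormedAddCommGroup E] [NormedSpace ℝ E]

lemma endpoint_extreme (v d : E) (g : E →L[ℝ] ℝ) (hg1 : ‖g‖ ≤ 1)
    (hgd : g d = 0) (hd : d ≠ 0)
    (hker : ∀ w : E, g w = 0 → ∃ α : ℝ, w = α • d)
    (s : ℝ) (hs : ‖v + s • d‖ ≤ 1) (hgv : g v = 1)
    (hmax : ∀ α : ℝ, ‖v + (s + α) • d‖ ≤ 1 → α ≤ 0) :
    v + s • d ∈ Set.extremePoints ℝ (Metric.closedBall (0:E) 1) := by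
  set p := v + s • d with hp
  have hgp : g p = 1 := by simp [hp, hgd, hgv]
  refine ⟨by simpa [Metric.mem_closedBall, dist_zero_right] using hs, ?_⟩
  intro y hy z hz hseg
  rw [Metric.mem_closedBall, dist_zero_right] at hy hz
  obtain ⟨a, b, ha, hb, hab, habp⟩ := hseg
  -- g y = g z = 1
  have hgy_le : g y ≤ 1 := by
    calc g y ≤ ‖g y‖ := le_abs_self _
    _ ≤ ‖g‖ * ‖y‖ := g.le_opNorm y
    _ ≤ 1 := by nlinarith [norm_nonneg y, norm_nonneg g]
  have hgz_le : g z ≤ 1 := by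
    calc g z ≤ ‖g z‖ := le_abs_self _
    _ ≤ ‖g‖ * ‖z‖ := g.le_opNorm z
    _ ≤ 1 := by nlinarith [norm_nonneg z, norm_nonneg g]
  have hsum : a * g y + b * g z = 1 := by
    have := congrArg g habp
    simpa [map_add, map_smul, smul_eq_mul, hgp] using this
  have hgy : g y = 1 := by nlinarith
  have hgz : g z = 1 := by nlinarith
  -- write y, z as p + α • d
  obtain ⟨α, hα⟩ := hker (y - p) (by simp [map_sub, hgy, hgp])
  obtain ⟨β, hβ⟩ := hker (z - p) (by simp [map_sub, hgz, hgp])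
  have hyp : y = p + α • d := by rw [← hα]; abel
  have hzp : z = p + β • d := by rw [← hβ]; abel
  have hy' : y = v + (s + α) • d := by rw [hyp, hp]; module
  have hz' : z = v + (s + β) • d := by rw [hzp, hp]; module
  have hαle : α ≤ 0 := hmax α (by rw [← hy']; exact hy)
  have hβle : β ≤ 0 := hmax β (by rw [← hz']; exact hz)
  -- a α + b β = 0
  have hcomb : (a * α + b * β) • d = 0 := by
    have h2 : a • y + b • z = (a + b) • p + (a * α + b * β) • d := by
      rw [hyp, hzp]; module
    rw [habp, hab, one_smul] at h2
    exact (left_eq_add.mp h2)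
  have hab0 : a * α + b * β = 0 := by
    by_contra h
    exact hd (by simpa [smul_eq_zero, h] using hcomb)
  have hα0 : α = 0 := by nlinarith
  have hβ0 : β = 0 := by nlinarith
  · rw [hy', hα0]; simp [hp]


/-- every unit vector in a 2-dimensional normed space is a convex combination
of two extreme points of the unit ball -/
lemma rep_extreme (hE : finrank ℝ E = 2) (v : E) (hv : ‖v‖ = 1) :
    ∃ p q : E, ∃ t : ℝ,
      p ∈ Set.extremePoints ℝ (Metric.closedBall (0:E) 1) ∧
      q ∈ Set.extremePoints ℝ (Metric.closedBall (0:E) 1) ∧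
      0 ≤ t ∧ t ≤ 1 ∧ v = (1 - t) • p + t • q := by
  haveI : FiniteDimensional ℝ E := FiniteDimensional.of_finrank_eq_succ hE
  have hvball : v ∈ Metric.closedBall (0:E) 1 := by
    simp [Metric.mem_closedBall, dist_zero_right, hv]
  by_cases hvext : v ∈ Set.extremePoints ℝ (Metric.closedBall (0:E) 1)
  · exact ⟨v, v, 0, hvext, hvext, le_refl 0, zero_le_one, by simp⟩
  rw [mem_extremePoints] at hvext
  push_neg at hvext
  obtain ⟨y, hy, z, hz, hseg, hne⟩ := hvext hvball
  obtain ⟨a, b, ha, hb, hab, habv⟩ := hseg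
  rw [Metric.mem_closedBall, dist_zero_right] at hy hz
  have hyz : y ≠ z := by
    intro h
    subst h
    have hvy : y = v := by
      have : (a + b) • y = v := by rw [← habv]; module
      rw [hab, one_smul] at this; exact this
    exact hne hvy hvy
  have ha' : a = 1 - b := by linarith
  rw [ha'] at habv
  set d := z - y with hd_def
  have hd : d ≠ 0 := sub_ne_zero.mpr (Ne.symm hyz)
  set I := {t : ℝ | ‖v + t • d‖ ≤ 1} with hI_def
  have hyv : v + (-b) • d = y := by
    rw [← habv, hd_def]; module
  have hzv : v + (1 - b) • d = z := by
    rw [← habv, hd_def]; module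
  have hbI : (-b) ∈ I := by rw [hI_def, mem_setOf_eq, hyv]; exact hy
  have haI : (1 - b) ∈ I := by rw [hI_def, mem_setOf_eq, hzv]; exact hz
  have hIclosed : IsClosed I := isClosed_le (by fun_prop) continuous_const
  have hIsub : I ⊆ Icc (-(2/‖d‖)) (2/‖d‖) := by
    intro t ht
    rw [hI_def, mem_setOf_eq] at ht
    have h1 : ‖t • d‖ ≤ ‖v + t • d‖ + ‖v‖ := by
      have := norm_sub_le (v + t • d) v
      simpa using this
    rw [norm_smul, Real.norm_eq_abs, hv] at h1
    have hd0 : (0:ℝ) < ‖d‖ := norm_pos_iff.mpr hd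
    have h2 : |t| ≤ 2 / ‖d‖ := by
      rw [le_div_iff₀ hd0]; nlinarith
    exact abs_le.mp h2
  have hIcomp : IsCompact I := (isCompact_Icc).of_isClosed_subset hIclosed hIsub
  have hIne : I.Nonempty := ⟨0, by simp [hI_def, hv]⟩
  set ts := sSup I with htsdef
  set ti := sInf I with htidef
  have htsmem : ts ∈ I := hIcomp.sSup_mem hIne
  have htimem : ti ∈ I := hIcomp.sInf_mem hIne
  have hbdda : BddAbove I := hIcomp.bddAbove
  have hbddb : BddBelow I := hIcomp.bddBelow
  have htspos : 0 < ts := lt_of_lt_of_le (by linarith) (le_csSup hbdda haI)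
  have htineg : ti < 0 := lt_of_le_of_lt (csInf_le hbddb hbI) (by linarith)
  -- the supporting functional
  obtain ⟨g, hg1, hgv0⟩ := exists_dual_vector ℝ v (by rw [← norm_ne_zero_iff, hv]; norm_num)
  have hgv : g v = 1 := by rw [hgv0, hv]; norm_num
  have hgle : ∀ t ∈ I, g v + t * g d ≤ 1 := by
    intro t ht
    have h1 : g (v + t • d) ≤ ‖g‖ * ‖v + t • d‖ :=
      le_trans (le_abs_self _) (g.le_opNorm _)
    rw [hI_def, mem_setOf_eq] at ht
    have h2 : ‖g‖ * ‖v + t • d‖ ≤ 1 := by rw [hg1]; linarith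
    have h3 : g (v + t • d) = g v + t * g d := by
      rw [map_add, map_smul]; simp [smul_eq_mul]
    linarith [le_trans (h3 ▸ h1) h2]
  have hgd : g d = 0 := by
    have h1 := hgle ts htsmem
    have h2 := hgle ti htimem
    rw [hgv] at h1 h2
    nlinarith
  -- kernel of g is spanned by d
  have hdker : d ∈ LinearMap.ker (g : E →ₗ[ℝ] ℝ) := by
    simpa [LinearMap.mem_ker] using hgd
  have hrt : LinearMap.range (g : E →ₗ[ℝ] ℝ) = ⊤ := by
    rw [LinearMap.range_eq_top]
    intro r
    exact ⟨r • v, by simp [map_smul, hgv, smul_eq_mul]⟩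
  have hkd : finrank ℝ (LinearMap.ker (g : E →ₗ[ℝ] ℝ)) = 1 := by
    have h1 := LinearMap.finrank_range_add_finrank_ker (g : E →ₗ[ℝ] ℝ)
    rw [hrt, finrank_top, hE, Module.finrank_self] at h1
    omega
  have hspan : (Submodule.span ℝ {d}) = LinearMap.ker (g : E →ₗ[ℝ] ℝ) := by
    apply Submodule.eq_of_le_of_finrank_eq
    · rw [Submodule.span_le]; intro w hw; rw [mem_singleton_iff] at hw; subst hw; exact hdker
    · rw [finrank_span_singleton hd, hkd]
  have hker : ∀ w : E, g w = 0 → ∃ α : ℝ, w = α • d := by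
    intro w hw
    have : w ∈ Submodule.span ℝ {d} := by
      rw [hspan]; simpa [LinearMap.mem_ker] using hw
    obtain ⟨α, hα⟩ := Submodule.mem_span_singleton.mp this
    exact ⟨α, hα.symm⟩
  -- the extreme endpoints
  have hpext : v + ts • d ∈ Set.extremePoints ℝ (Metric.closedBall (0:E) 1) := by
    apply endpoint_extreme v d g hg1.le hgd hd hker ts htsmem hgv
    intro α hα
    have : ts + α ∈ I := hα
    have := le_csSup hbdda this
    linarith
  have hqext : v + ti • d ∈ Set.extremePoints ℝ (Metric.closedBall (0:E) 1) := by
    have h0 : v + (-ti) • (-d) = v + ti • d := by module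
    rw [← h0]
    apply endpoint_extreme v (-d) g hg1.le (by simp [hgd]) (neg_ne_zero.mpr hd)
      (fun w hw => by obtain ⟨α, hα⟩ := hker w hw; exact ⟨-α, by rw [hα]; module⟩)
      (-ti) (by rw [h0]; exact htimem) hgv
    intro α hα
    have he : v + (-ti + α) • (-d) = v + (ti - α) • d := by module
    rw [he] at hα
    have : ti - α ∈ I := hα
    have := csInf_le hbddb this
    linarith
  -- conclusion
  have htd : 0 < ts - ti := by linarith
  refine ⟨v + ts • d, v + ti • d, ts / (ts - ti), hpext, hqext, ?_, ?_, ?_⟩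
  · positivity
  · rw [div_le_one htd]; linarith
  · have hc : (1 - ts / (ts - ti)) * ts + (ts / (ts - ti)) * ti = 0 := by
      field_simp
      ring
    have : (1 - ts / (ts - ti)) • (v + ts • d) + (ts / (ts - ti)) • (v + ti • d)
        = v + ((1 - ts / (ts - ti)) * ts + ts / (ts - ti) * ti) • d := by module
    rw [this, hc]
    simp


end aux2



lemma unit_ne_smul {E : Type*} [NormedAddCommGroup E] [NormedSpace ℝ E]
    {u w : E} (hu : ‖u‖ = 1) (hw : ‖w‖ = 1) (h1 : u ≠ w) (h2 : u ≠ -w) (r : ℝ) :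
    u ≠ r • w := by
  intro hr
  have habs : |r| = 1 := by
    have : ‖u‖ = |r| * ‖w‖ := by rw [hr, norm_smul, Real.norm_eq_abs]
    rw [hu, hw, mul_one] at this
    exact this.symm
  rcases (abs_eq (by norm_num : (0:ℝ) ≤ 1)).mp habs with rfl | rfl
  · rw [one_smul] at hr; exact h1 hr
  · rw [neg_smul, one_smul] at hr; exact h2 hr

lemma exists_functional3 {E : Type*} [NormedAddCommGroup E] [NormedSpace ℝ E]
    (hE : finrank ℝ E = 2) {a b c : E} (ha : ‖a‖ = 1) (hb : ‖b‖ = 1) (hc : ‖c‖ = 1)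
    (hab : a ≠ b) (hab' : a ≠ -b) (hac : a ≠ c) (hac' : a ≠ -c) :
    ∃ g : E →L[ℝ] ℝ, g a = 0 ∧ g b = 1 ∧ g c ≠ 0 := by
  haveI : FiniteDimensional ℝ E := FiniteDimensional.of_finrank_eq_succ hE
  have hli : LinearIndependent ℝ ![a, b] := by
    rw [linearIndependent_fin2]
    refine ⟨by simp [← norm_ne_zero_iff, hb], fun r => ?_⟩
    exact fun h => unit_ne_smul ha hb hab hab' r h.symm
  have hcard : Fintype.card (Fin 2) = finrank ℝ E := by simp [hE]
  let B := basisOfLinearIndependentOfCardEqFinrank hli hcard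
  have hB : ⇑B = ![a, b] := coe_basisOfLinearIndependentOfCardEqFinrank hli hcard
  set g₀ : E →ₗ[ℝ] ℝ := B.coord 1 with hg₀def
  have hga : g₀ a = 0 := by
    have h0 : a = B 0 := by rw [hB]; rfl
    rw [h0, hg₀def, Basis.coord_apply, Basis.repr_self]
    simp
  have hgb : g₀ b = 1 := by
    have h0 : b = B 1 := by rw [hB]; rfl
    rw [h0, hg₀def, Basis.coord_apply, Basis.repr_self]
    simp
  have hgc : g₀ c ≠ 0 := by
    intro hzero
    -- then a and c both lie in ker g₀, which is 1-dimensional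
    have hrange : LinearMap.range g₀ = ⊤ := by
      rw [LinearMap.range_eq_top]
      intro r
      exact ⟨r • b, by rw [map_smul, hgb, smul_eq_mul, mul_one]⟩
    have hker1 : finrank ℝ (LinearMap.ker g₀) = 1 := by
      have h1 := LinearMap.finrank_range_add_finrank_ker g₀
      rw [hrange, finrank_top, hE, Module.finrank_self] at h1
      omega
    have haker : a ∈ LinearMap.ker g₀ := by simpa [LinearMap.mem_ker] using hga
    have hane : a ≠ 0 := by simp [← norm_ne_zero_iff, ha]
    have hspan : Submodule.span ℝ {a} = LinearMap.ker g₀ := by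
      apply Submodule.eq_of_le_of_finrank_eq
      · rw [Submodule.span_le]
        intro w hw
        rw [mem_singleton_iff] at hw
        subst hw; exact haker
      · rw [finrank_span_singleton hane, hker1]
    have hcker : c ∈ Submodule.span ℝ {a} := by
      rw [hspan]; simpa [LinearMap.mem_ker] using hzero
    obtain ⟨r, hr⟩ := Submodule.mem_span_singleton.mp hcker
    exact unit_ne_smul hc ha (Ne.symm hac)
      (by intro h; exact hac' (by rw [h, neg_neg])) r hr.symm
  exact ⟨LinearMap.toContinuousLinearMap g₀,
    by rw [LinearMap.coe_toContinuousLinearMap']; exact hga,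
    by rw [LinearMap.coe_toContinuousLinearMap']; exact hgb,
    by rw [LinearMap.coe_toContinuousLinearMap']; exact hgc⟩


lemma no_common_functional {X Y : Type*} [NormedAddCommGroup X] [NormedSpace ℝ X]
    [NormedAddCommGroup Y] [NormedSpace ℝ Y] (hX : finrank ℝ X = 2)
    (T : X →L[ℝ] Y) (hT : ‖T‖ = 1) (f : Y →L[ℝ] ℝ) (hfn : ‖f‖ = 1)
    (x₁ x₂ x₃ : X) (hn1 : ‖x₁‖ = 1) (hn2 : ‖x₂‖ = 1) (hn3 : ‖x₃‖ = 1)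
    (he1 : x₁ ∈ Set.extremePoints ℝ (Metric.closedBall (0:X) 1))
    (he2 : x₂ ∈ Set.extremePoints ℝ (Metric.closedBall (0:X) 1))
    (he3 : x₃ ∈ Set.extremePoints ℝ (Metric.closedBall (0:X) 1))
    (hne12 : x₁ ≠ x₂) (hne13 : x₁ ≠ x₃) (hne23 : x₂ ≠ x₃)
    (hT1 : f (T x₁) = 1) (hT2 : f (T x₂) = 1) (hT3 : f (T x₃) = 1) : False := by
  haveI : FiniteDimensional ℝ X := FiniteDimensional.of_finrank_eq_succ hX
  have hball : ∀ x : X, ‖x‖ = 1 → x ∈ Metric.closedBall (0:X) 1 := by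
    intro x hx
    rw [Metric.mem_closedBall, dist_zero_right, hx]
  have hhull : ∀ α β γ : ℝ, 0 ≤ α → 0 ≤ β → 0 ≤ γ → α + β + γ = 1 →
      ‖α • x₁ + β • x₂ + γ • x₃‖ = 1 := by
    intro α β γ hα hβ hγ hsum
    have hub : ‖α • x₁ + β • x₂ + γ • x₃‖ ≤ 1 := by
      calc ‖α • x₁ + β • x₂ + γ • x₃‖ ≤ ‖α • x₁ + β • x₂‖ + ‖γ • x₃‖ := norm_add_le _ _
      _ ≤ ‖α • x₁‖ + ‖β • x₂‖ + ‖γ • x₃‖ := by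
          linarith [norm_add_le (α • x₁) (β • x₂)]
      _ = α + β + γ := by
          rw [norm_smul, norm_smul, norm_smul, hn1, hn2, hn3, Real.norm_eq_abs,
            Real.norm_eq_abs, Real.norm_eq_abs, abs_of_nonneg hα, abs_of_nonneg hβ,
            abs_of_nonneg hγ]
          ring
      _ = 1 := hsum
    have hfv : f (T (α • x₁ + β • x₂ + γ • x₃)) = 1 := by
      simp only [map_add, map_smul, smul_eq_mul, hT1, hT2, hT3]
      linarith
    have hlb : 1 ≤ ‖α • x₁ + β • x₂ + γ • x₃‖ := by
      set w := α • x₁ + β • x₂ + γ • x₃ with hw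
      calc (1:ℝ) = f (T w) := hfv.symm
      _ ≤ ‖f (T w)‖ := le_abs_self _
      _ ≤ ‖f‖ * ‖T w‖ := f.le_opNorm _
      _ ≤ 1 * (‖T‖ * ‖w‖) := by
          rw [hfn, one_mul, one_mul]; exact T.le_opNorm w
      _ = ‖w‖ := by rw [hT]; ring
    exact le_antisymm hub hlb
  by_cases hdep : ∃ r : ℝ, x₃ - x₁ = r • (x₂ - x₁)
  · -- collinear case
    obtain ⟨r, hr⟩ := hdep
    have hx₃eq : x₃ = (1 - r) • x₁ + r • x₂ := by
      have h0 : x₃ = r • (x₂ - x₁) + x₁ := eq_add_of_sub_eq hr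
      rw [h0]; module
    have hr0 : r ≠ 0 := by
      intro h; rw [h] at hx₃eq; simp at hx₃eq; exact hne13 hx₃eq.symm
    have hr1 : r ≠ 1 := by
      intro h; rw [h] at hx₃eq; simp at hx₃eq; exact hne23 hx₃eq.symm
    rcases lt_trichotomy r 0 with hneg | hzero | hpos
    · -- r < 0 : x₁ is a strict combination of x₂ and x₃
      have h1r : (0:ℝ) < 1 - r := by linarith
      have hseg : x₁ ∈ openSegment ℝ x₂ x₃ := by
        refine ⟨-r/(1-r), 1/(1-r), div_pos (by linarith) h1r, by positivity, ?_, ?_⟩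
        · field_simp; ring
        · rw [hx₃eq]
          match_scalars <;> field_simp <;> ring
      have := (he1.2 (hball _ hn2) (hball _ hn3) hseg)
      exact hne12 this.symm
    · exact hr0 hzero
    · rcases lt_trichotomy r 1 with hlt | heq | hgt
      · -- 0 < r < 1 : x₃ is a strict combination of x₁ and x₂
        have hseg : x₃ ∈ openSegment ℝ x₁ x₂ :=
          ⟨1 - r, r, by linarith, hpos, by ring, hx₃eq.symm⟩
        have := (he3.2 (hball _ hn1) (hball _ hn2) hseg)
        exact hne13 this
      · exact hr1 heq
      · -- r > 1 : x₂ is a strict combination of x₁ and x₃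
        have hrpos : (0:ℝ) < r := by linarith
        have hseg : x₂ ∈ openSegment ℝ x₁ x₃ := by
          refine ⟨1 - 1/r, 1/r, by
            have : 1/r < 1 := by rw [div_lt_one hrpos]; linarith
            linarith, by positivity, by ring, ?_⟩
          rw [hx₃eq]
          match_scalars <;> field_simp <;> ring
        have := (he2.2 (hball _ hn1) (hball _ hn3) hseg)
        exact hne12 this
  · -- affinely independent case : scaling contradiction
    push_neg at hdep
    have hli : LinearIndependent ℝ ![x₃ - x₁, x₂ - x₁] := by
      rw [linearIndependent_fin2]
      constructor
      · show x₂ - x₁ ≠ 0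
        exact sub_ne_zero.mpr (Ne.symm hne12)
      · intro r
        show r • (x₂ - x₁) ≠ x₃ - x₁
        exact fun h => hdep r h.symm
    have hcard : Fintype.card (Fin 2) = finrank ℝ X := by simp [hX]
    let B := basisOfLinearIndependentOfCardEqFinrank hli hcard
    have hB : ⇑B = ![x₃ - x₁, x₂ - x₁] := coe_basisOfLinearIndependentOfCardEqFinrank hli hcard
    set p := B.repr x₁ 0 with hpdef
    set q := B.repr x₁ 1 with hqdef
    have hx₁eq : p • (x₃ - x₁) + q • (x₂ - x₁) = x₁ := by
      have h0 := B.sum_repr x₁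
      rw [Fin.sum_univ_two] at h0
      rw [← hpdef, ← hqdef] at h0
      have h1 : B 0 = x₃ - x₁ := by rw [hB]; rfl
      have h2 : B 1 = x₂ - x₁ := by rw [hB]; rfl
      rw [h1, h2] at h0
      exact h0
    set l₁ := 1 + p + q with hl₁
    set l₂ := -q with hl₂
    set l₃ := -p with hl₃
    have hlsum : l₁ + l₂ + l₃ = 1 := by rw [hl₁, hl₂, hl₃]; ring
    have hlrel : l₁ • x₁ + l₂ • x₂ + l₃ • x₃ = 0 := by
      have h0 : l₁ • x₁ + l₂ • x₂ + l₃ • x₃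
          = x₁ - (p • (x₃ - x₁) + q • (x₂ - x₁)) := by
        rw [hl₁, hl₂, hl₃]; module
      rw [h0, hx₁eq, sub_self]
    set L := 1 + |l₁| + |l₂| + |l₃| with hL
    have hLpos : 0 < L := by positivity
    set δ := 1/(3*L) with hδ
    have hδpos : 0 < δ := by positivity
    have hδL : δ * L = 1/3 := by rw [hδ]; field_simp
    have habs : ∀ l : ℝ, |l| ≤ L - 1 → δ * l ≤ 1/3 - δ := by
      intro l hl
      have h1 : δ * l ≤ δ * |l| := mul_le_mul_of_nonneg_left (le_abs_self l) hδpos.le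
      have h2 : δ * |l| ≤ δ * (L - 1) := mul_le_mul_of_nonneg_left hl hδpos.le
      nlinarith
    have hb1 : |l₁| ≤ L - 1 := by rw [hL]; have := abs_nonneg l₂; have := abs_nonneg l₃; linarith
    have hb2 : |l₂| ≤ L - 1 := by rw [hL]; have := abs_nonneg l₁; have := abs_nonneg l₃; linarith
    have hb3 : |l₃| ≤ L - 1 := by rw [hL]; have := abs_nonneg l₁; have := abs_nonneg l₂; linarith
    set a₁ := (1+δ)/3 - δ*l₁ with ha₁
    set a₂ := (1+δ)/3 - δ*l₂ with ha₂
    set a₃ := (1+δ)/3 - δ*l₃ with ha₃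
    have hpos1 : 0 < a₁ := by have := habs l₁ hb1; rw [ha₁]; linarith
    have hpos2 : 0 < a₂ := by have := habs l₂ hb2; rw [ha₂]; linarith
    have hpos3 : 0 < a₃ := by have := habs l₃ hb3; rw [ha₃]; linarith
    have hsum : a₁ + a₂ + a₃ = 1 := by
      have h0 : a₁ + a₂ + a₃ = 1 + δ - δ*(l₁ + l₂ + l₃) := by
        rw [ha₁, ha₂, ha₃]; ring
      rw [h0, hlsum]; ring
    have hvec : a₁ • x₁ + a₂ • x₂ + a₃ • x₃
        = (1+δ) • ((3:ℝ)⁻¹ • (x₁ + x₂ + x₃)) - δ • (l₁ • x₁ + l₂ • x₂ + l₃ • x₃) := by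
      rw [ha₁, ha₂, ha₃]; module
    rw [hlrel, smul_zero, sub_zero] at hvec
    have hv₀eq : (3:ℝ)⁻¹ • (x₁ + x₂ + x₃)
        = (3:ℝ)⁻¹ • x₁ + (3:ℝ)⁻¹ • x₂ + (3:ℝ)⁻¹ • x₃ := by module
    have hnv₀ : ‖(3:ℝ)⁻¹ • (x₁ + x₂ + x₃)‖ = 1 := by
      rw [hv₀eq]
      exact hhull _ _ _ (by norm_num) (by norm_num) (by norm_num) (by norm_num)
    have hna : ‖a₁ • x₁ + a₂ • x₂ + a₃ • x₃‖ = 1 :=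
      hhull _ _ _ hpos1.le hpos2.le hpos3.le hsum
    rw [hvec, norm_smul, Real.norm_eq_abs, abs_of_pos (by linarith : (0:ℝ) < 1 + δ), hnv₀] at hna
    linarith

section aux3
variable {X Y : Type*} [NormedAddCommGroup X] [NormedSpace ℝ X]
  [NormedAddCommGroup Y] [NormedSpace ℝ Y]

lemma deriv_bound [FiniteDimensional ℝ X] [FiniteDimensional ℝ Y] [Nontrivial X]
    (T S : X →L[ℝ] Y) (hT : ‖T‖ = 1)
    (hP : ∀ v : X, ‖v‖ = 1 → ∀ g : Y →L[ℝ] ℝ, ‖g‖ ≤ 1 → g (T v) = 1 → g (S v) = 0)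
    {ε : ℝ} (hε : 0 < ε) :
    ∃ δ : ℝ, 0 < δ ∧ ∀ t : ℝ, 0 < t → t ≤ δ → ‖T + t • S‖ ≤ 1 + ε * t := by
  haveI : FiniteDimensional ℝ (Y →L[ℝ] ℝ) :=
    Module.Finite.equiv (LinearMap.toContinuousLinearMap : (Y →ₗ[ℝ] ℝ) ≃ₗ[ℝ] (Y →L[ℝ] ℝ))
  by_contra hcon
  push_neg at hcon
  choose t ht0 htle hgt using fun n : ℕ => hcon (1/(n+1)) (by positivity)
  choose v hv1 hv2 using fun n : ℕ => attain (T + t n • S)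
  have hwlb : ∀ n, 1 + ε * t n < ‖(T + t n • S) (v n)‖ := by
    intro n; rw [hv2 n]; exact hgt n
  have hwub : ∀ n, ‖(T + t n • S) (v n)‖ ≤ 1 + t n * ‖S‖ := by
    intro n
    calc ‖(T + t n • S) (v n)‖ ≤ ‖T + t n • S‖ * ‖v n‖ := (T + t n • S).le_opNorm _
    _ = ‖T + t n • S‖ := by rw [hv1 n, mul_one]
    _ ≤ ‖T‖ + ‖t n • S‖ := norm_add_le _ _
    _ ≤ 1 + t n * ‖S‖ := by
        rw [hT]
        have := norm_smul_le (t n) S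
        rw [Real.norm_eq_abs, abs_of_pos (ht0 n)] at this
        linarith
  have hwne : ∀ n, (T + t n • S) (v n) ≠ 0 := by
    intro n
    rw [← norm_ne_zero_iff]
    have := hwlb n
    have h0 : (0:ℝ) < 1 + ε * t n := by nlinarith [ht0 n]
    linarith
  choose g hg1 hg2 using fun n : ℕ => exists_dual_vector ℝ _ (norm_ne_zero_iff.mpr (hwne n))
  -- extract subsequences
  obtain ⟨vv, hvv, φ, hφ, hvtend⟩ := (isCompact_sphere (0:X) 1).tendsto_subseq
    (x := v) (fun n => by simp [mem_sphere_zero_iff_norm, hv1 n])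
  obtain ⟨gg, hgg, ψ, hψ, hgtend⟩ :=
    (isCompact_closedBall (0 : Y →L[ℝ] ℝ) 1).tendsto_subseq
    (x := fun n => g (φ n)) (fun n => by
      simp [Metric.mem_closedBall, dist_zero_right, hg1 (φ n)])
  set σ : ℕ → ℕ := φ ∘ ψ with hσdef
  have hσ : StrictMono σ := hφ.comp hψ
  have hvt : Tendsto (fun n => v (σ n)) atTop (𝓝 vv) := hvtend.comp hψ.tendsto_atTop
  have hgt2 : Tendsto (fun n => g (σ n)) atTop (𝓝 gg) := hgtend
  have htt : Tendsto (fun n => t (σ n)) atTop (𝓝 0) := by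
    apply squeeze_zero (fun n => (ht0 (σ n)).le) (fun n => ?_)
      tendsto_one_div_add_atTop_nhds_zero_nat
    calc t (σ n) ≤ 1/(σ n + 1) := htle (σ n)
    _ ≤ 1/(n+1) := by
        apply one_div_le_one_div_of_le (by positivity)
        have h : n ≤ σ n := hσ.le_apply
        have h2 : ((n:ℝ)) ≤ ((σ n : ℕ) : ℝ) := by exact_mod_cast h
        linarith
  -- limits
  have hTv : Tendsto (fun n => T (v (σ n))) atTop (𝓝 (T vv)) :=
    (T.continuous.tendsto _).comp hvt
  have hSv : Tendsto (fun n => S (v (σ n))) atTop (𝓝 (S vv)) :=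
    (S.continuous.tendsto _).comp hvt
  have hwt : Tendsto (fun n => (T + t (σ n) • S) (v (σ n))) atTop (𝓝 (T vv)) := by
    have h1 : Tendsto (fun n => T (v (σ n)) + t (σ n) • S (v (σ n))) atTop
        (𝓝 (T vv + (0:ℝ) • S vv)) := hTv.add (htt.smul hSv)
    rw [zero_smul, add_zero] at h1
    have h2 : (fun n => (T + t (σ n) • S) (v (σ n)))
        = fun n => T (v (σ n)) + t (σ n) • S (v (σ n)) := by
      funext n; simp
    rw [h2]; exact h1
  have hwnorm : Tendsto (fun n => ‖(T + t (σ n) • S) (v (σ n))‖) atTop (𝓝 ‖T vv‖) :=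
    hwt.norm
  have hwnorm1 : Tendsto (fun n => ‖(T + t (σ n) • S) (v (σ n))‖) atTop (𝓝 1) := by
    have hlow : Tendsto (fun n => 1 + ε * t (σ n)) atTop (𝓝 1) := by
      have := (tendsto_const_nhds (x := (1:ℝ))).add ((tendsto_const_nhds (x := ε)).mul htt)
      simpa using this
    have hup : Tendsto (fun n => 1 + t (σ n) * ‖S‖) atTop (𝓝 1) := by
      have := (tendsto_const_nhds (x := (1:ℝ))).add (htt.mul (tendsto_const_nhds (x := ‖S‖)))
      simpa using this
    exact tendsto_of_tendsto_of_tendsto_of_le_of_le hlow hup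
      (fun n => (hwlb (σ n)).le) (fun n => hwub (σ n))
  have hTv1 : ‖T vv‖ = 1 := tendsto_nhds_unique hwnorm hwnorm1
  -- evaluation limits
  have heval : ∀ (z : ℕ → Y) (zz : Y), Tendsto z atTop (𝓝 zz) →
      Tendsto (fun n => g (σ n) (z n)) atTop (𝓝 (gg zz)) := by
    intro z zz hz
    have hc : Continuous fun p : (Y →L[ℝ] ℝ) × Y => p.1 p.2 :=
      isBoundedBilinearMap_apply.continuous
    exact (hc.tendsto (gg, zz)).comp (hgt2.prodMk_nhds hz)
  have hgw : Tendsto (fun n => g (σ n) ((T + t (σ n) • S) (v (σ n)))) atTop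
      (𝓝 (gg (T vv))) := heval _ _ hwt
  have hgw1 : Tendsto (fun n => g (σ n) ((T + t (σ n) • S) (v (σ n)))) atTop (𝓝 1) := by
    have : ∀ n, g (σ n) ((T + t (σ n) • S) (v (σ n)))
        = ‖(T + t (σ n) • S) (v (σ n))‖ := fun n => by exact_mod_cast hg2 (σ n)
    rw [funext this]
    exact hwnorm1
  have hggT : gg (T vv) = 1 := tendsto_nhds_unique hgw hgw1
  -- lower bound on g (S v)
  have hgSlb : ∀ n, ε ≤ g (σ n) (S (v (σ n))) := by
    intro n
    set m := σ n
    have h1 : g m ((T + t m • S) (v m)) = g m (T (v m)) + t m * g m (S (v m)) := by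
      simp [map_add, map_smul, smul_eq_mul]
    have h2 : g m (T (v m)) ≤ 1 := by
      calc g m (T (v m)) ≤ ‖g m (T (v m))‖ := le_abs_self _
      _ ≤ ‖g m‖ * ‖T (v m)‖ := (g m).le_opNorm _
      _ ≤ 1 * 1 := by
          apply mul_le_mul (le_of_eq (hg1 m)) ?_ (norm_nonneg _) zero_le_one
          calc ‖T (v m)‖ ≤ ‖T‖ * ‖v m‖ := T.le_opNorm _
          _ = 1 := by rw [hT, hv1 m, mul_one]
      _ = 1 := mul_one _
    have h3 : g m ((T + t m • S) (v m)) = ‖(T + t m • S) (v m)‖ := by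
      exact_mod_cast hg2 m
    have h4 := hwlb m
    have h5 : 0 < t m := ht0 m
    nlinarith [h1, h2, h3, h4]
  have hgS : Tendsto (fun n => g (σ n) (S (v (σ n)))) atTop (𝓝 (gg (S vv))) :=
    heval _ _ hSv
  have hggS : ε ≤ gg (S vv) := ge_of_tendsto hgS (Eventually.of_forall hgSlb)
  -- contradiction via hP
  have hvv1 : ‖vv‖ = 1 := by rwa [mem_sphere_zero_iff_norm] at hvv
  have hgg1 : ‖gg‖ ≤ 1 := by rwa [Metric.mem_closedBall, dist_zero_right] at hgg
  have := hP vv hvv1 gg hgg1 hggT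
  linarith

end aux3

set_option maxHeartbeats 2000000 in
theorem stmt13 (X Y : Type*) [NormedAddCommGroup X] [NormedSpace ℝ X]
    [NormedAddCommGroup Y] [NormedSpace ℝ Y]
    (hX : Module.finrank ℝ X = 2) (hY : Module.finrank ℝ Y = 2)
    (T : X →L[ℝ] Y) (hT : ‖T‖ = 1)
    (x₁ x₂ x₃ : X)
    (hdist : x₁ ≠ x₂ ∧ x₁ ≠ -x₂ ∧ x₁ ≠ x₃ ∧ x₁ ≠ -x₃ ∧ x₂ ≠ x₃ ∧ x₂ ≠ -x₃)
    (hMT : {v : X | ‖v‖ = 1 ∧ ‖T v‖ = 1} ∩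
        Set.extremePoints ℝ (Metric.closedBall (0 : X) 1)
      = {x₁, -x₁, x₂, -x₂, x₃, -x₃})
    (hsm : ∀ i : Fin 3, ∃! f : Y →L[ℝ] ℝ, ‖f‖ = 1 ∧ f (T (![x₁, x₂, x₃] i)) = 1) :
    Module.finrank ℝ ↥(Submodule.span ℝ
      {F : (X →L[ℝ] Y) →L[ℝ] ℝ | ‖F‖ = 1 ∧ F T = 1}) = 3 := by
  obtain ⟨h12, h12', h13, h13', h23, h23'⟩ := hdist
  haveI : FiniteDimensional ℝ X := FiniteDimensional.of_finrank_eq_succ hX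
  haveI : FiniteDimensional ℝ Y := FiniteDimensional.of_finrank_eq_succ hY
  haveI : Nontrivial X := Module.nontrivial_of_finrank_pos (R := ℝ) (by omega)
  haveI : FiniteDimensional ℝ (X →L[ℝ] Y) :=
    Module.Finite.equiv (LinearMap.toContinuousLinearMap : (X →ₗ[ℝ] Y) ≃ₗ[ℝ] (X →L[ℝ] Y))
  haveI : FiniteDimensional ℝ ((X →L[ℝ] Y) →L[ℝ] ℝ) :=
    Module.Finite.equiv
      (LinearMap.toContinuousLinearMap : ((X →L[ℝ] Y) →ₗ[ℝ] ℝ) ≃ₗ[ℝ] ((X →L[ℝ] Y) →L[ℝ] ℝ))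
  have hdimL : finrank ℝ (X →L[ℝ] Y) = 4 := by
    rw [← LinearEquiv.finrank_eq
      (LinearMap.toContinuousLinearMap : (X →ₗ[ℝ] Y) ≃ₗ[ℝ] (X →L[ℝ] Y)),
      Module.finrank_linearMap, hX, hY]
  have hdimD : finrank ℝ ((X →L[ℝ] Y) →L[ℝ] ℝ) = 4 := by
    rw [← LinearEquiv.finrank_eq
      (LinearMap.toContinuousLinearMap : ((X →L[ℝ] Y) →ₗ[ℝ] ℝ) ≃ₗ[ℝ] ((X →L[ℝ] Y) →L[ℝ] ℝ)),
      Module.finrank_linearMap, hdimL, Module.finrank_self, mul_one]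
  -- basic facts about the six points
  have hmem : ∀ w ∈ ({x₁, -x₁, x₂, -x₂, x₃, -x₃} : Set X),
      ‖w‖ = 1 ∧ ‖T w‖ = 1 ∧ w ∈ Set.extremePoints ℝ (Metric.closedBall (0:X) 1) := by
    intro w hw
    rw [← hMT] at hw
    exact ⟨hw.1.1, hw.1.2, hw.2⟩
  have hx1 := hmem x₁ (by simp)
  have hx2 := hmem x₂ (by simp)
  have hx3 := hmem x₃ (by simp)
  have hx1' := hmem (-x₁) (by simp)
  have hx2' := hmem (-x₂) (by simp)
  have hx3' := hmem (-x₃) (by simp)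
  -- the unique supporting functionals
  have hf : ∀ x : X, (∃! f : Y →L[ℝ] ℝ, ‖f‖ = 1 ∧ f (T x) = 1) →
      ∃ f : Y →L[ℝ] ℝ, (‖f‖ = 1 ∧ f (T x) = 1) ∧
        ∀ g : Y →L[ℝ] ℝ, ‖g‖ = 1 → g (T x) = 1 → g = f := by
    intro x hx
    obtain ⟨f, hf1, hf2⟩ := hx
    exact ⟨f, hf1, fun g h1 h2 => hf2 g ⟨h1, h2⟩⟩
  obtain ⟨f₁, ⟨hf₁n, hf₁x⟩, hf₁u⟩ := hf x₁ (hsm 0)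
  obtain ⟨f₂, ⟨hf₂n, hf₂x⟩, hf₂u⟩ := hf x₂ (hsm 1)
  obtain ⟨f₃, ⟨hf₃n, hf₃x⟩, hf₃u⟩ := hf x₃ (hsm 2)
  -- the rank-one functionals Fᵢ = fᵢ ⊗ xᵢ
  have hmkF : ∀ (x : X) (f : Y →L[ℝ] ℝ), ‖x‖ = 1 → ‖f‖ = 1 → f (T x) = 1 →
      ∃ F : (X →L[ℝ] Y) →L[ℝ] ℝ, (∀ S : X →L[ℝ] Y, F S = f (S x)) ∧ ‖F‖ = 1 ∧ F T = 1 := by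
    intro x f hx hfn hfx
    refine ⟨f.comp (ContinuousLinearMap.apply ℝ Y x), fun S => rfl, ?_, hfx⟩
    have hub : ‖f.comp (ContinuousLinearMap.apply ℝ Y x)‖ ≤ 1 := by
      refine ContinuousLinearMap.opNorm_le_bound _ zero_le_one fun S => ?_
      calc ‖f (S x)‖ ≤ ‖f‖ * ‖S x‖ := f.le_opNorm _
      _ ≤ 1 * (‖S‖ * ‖x‖) := by
          rw [hfn, one_mul, one_mul]; exact S.le_opNorm x
      _ = 1 * ‖S‖ := by rw [hx, mul_one]
    have hlb : (1:ℝ) ≤ ‖f.comp (ContinuousLinearMap.apply ℝ Y x)‖ := by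
      have h1 : (1:ℝ) = f (T x) := hfx.symm
      calc (1:ℝ) = f (T x) := hfx.symm
      _ ≤ ‖(f.comp (ContinuousLinearMap.apply ℝ Y x)) T‖ := le_abs_self _
      _ ≤ ‖f.comp (ContinuousLinearMap.apply ℝ Y x)‖ * ‖T‖ :=
          (f.comp (ContinuousLinearMap.apply ℝ Y x)).le_opNorm T
      _ = ‖f.comp (ContinuousLinearMap.apply ℝ Y x)‖ := by rw [hT, mul_one]
    exact le_antisymm hub hlb
  obtain ⟨F₁, hF₁app, hF₁n, hF₁T⟩ := hmkF x₁ f₁ hx1.1 hf₁n hf₁x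
  obtain ⟨F₂, hF₂app, hF₂n, hF₂T⟩ := hmkF x₂ f₂ hx2.1 hf₂n hf₂x
  obtain ⟨F₃, hF₃app, hF₃n, hF₃T⟩ := hmkF x₃ f₃ hx3.1 hf₃n hf₃x
  -- key pointwise lemma (Lemma A)
  have hone : ∀ (x : X) (f : Y →L[ℝ] ℝ), ‖x‖ = 1 →
      (∀ g' : Y →L[ℝ] ℝ, ‖g'‖ = 1 → g' (T x) = 1 → g' = f) →
      ∀ (S : X →L[ℝ] Y), f (S x) = 0 →
      ∀ g : Y →L[ℝ] ℝ, ‖g‖ ≤ 1 → g (T x) = 1 → g (S x) = 0 := by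
    intro x f hx hu S hfS g hg hgTx
    have hTx : ‖T x‖ ≤ 1 := by
      calc ‖T x‖ ≤ ‖T‖ * ‖x‖ := T.le_opNorm x
      _ = 1 := by rw [hT, hx, mul_one]
    have hgn : ‖g‖ = 1 := by
      refine le_antisymm hg ?_
      calc (1:ℝ) = g (T x) := hgTx.symm
      _ ≤ ‖g (T x)‖ := le_abs_self _
      _ ≤ ‖g‖ * ‖T x‖ := g.le_opNorm _
      _ ≤ ‖g‖ * 1 := mul_le_mul_of_nonneg_left hTx (norm_nonneg g)
      _ = ‖g‖ := mul_one _
    rw [hu g hgn hgTx]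
    exact hfS
  have hsix : ∀ (S : X →L[ℝ] Y), f₁ (S x₁) = 0 → f₂ (S x₂) = 0 → f₃ (S x₃) = 0 →
      ∀ w ∈ ({x₁, -x₁, x₂, -x₂, x₃, -x₃} : Set X), ∀ g : Y →L[ℝ] ℝ,
      ‖g‖ ≤ 1 → g (T w) = 1 → g (S w) = 0 := by
    intro S h1 h2 h3
    have hneg : ∀ (x : X) (f : Y →L[ℝ] ℝ), ‖x‖ = 1 →
        (∀ g' : Y →L[ℝ] ℝ, ‖g'‖ = 1 → g' (T x) = 1 → g' = f) → f (S x) = 0 →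
        ∀ g : Y →L[ℝ] ℝ, ‖g‖ ≤ 1 → g (T (-x)) = 1 → g (S (-x)) = 0 := by
      intro x f hx hu hfS g hg hgT
      have h1' : (-g) (T x) = 1 := by
        rw [map_neg, map_neg] at hgT
        simpa [ContinuousLinearMap.neg_apply] using hgT
      have h2' := hone x f hx hu S hfS (-g) (by simpa using hg) h1'
      rw [map_neg, map_neg]
      simp only [ContinuousLinearMap.neg_apply] at h2'
      linarith
    intro w hw g hg hgT
    simp only [Set.mem_insert_iff, Set.mem_singleton_iff] at hw
    rcases hw with rfl | rfl | rfl | rfl | rfl | rfl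
    · exact hone _ f₁ hx1.1 hf₁u S h1 g hg hgT
    · exact hneg _ f₁ hx1.1 hf₁u h1 g hg hgT
    · exact hone _ f₂ hx2.1 hf₂u S h2 g hg hgT
    · exact hneg _ f₂ hx2.1 hf₂u h2 g hg hgT
    · exact hone _ f₃ hx3.1 hf₃u S h3 g hg hgT
    · exact hneg _ f₃ hx3.1 hf₃u h3 g hg hgT
  have key : ∀ (S : X →L[ℝ] Y), f₁ (S x₁) = 0 → f₂ (S x₂) = 0 → f₃ (S x₃) = 0 →
      ∀ v : X, ‖v‖ = 1 → ∀ g : Y →L[ℝ] ℝ, ‖g‖ ≤ 1 → g (T v) = 1 → g (S v) = 0 := by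
    intro S h1 h2 h3 v hv g hg hgT
    obtain ⟨p, q, t, hpext, hqext, ht0, ht1, hveq⟩ := rep_extreme hX v hv
    have hterm : ∀ w : X, w ∈ Set.extremePoints ℝ (Metric.closedBall (0:X) 1) →
        g (T w) = 1 → g (S w) = 0 := by
      intro w hw hgw
      have hwn : ‖w‖ ≤ 1 := by
        have := hw.1
        rwa [Metric.mem_closedBall, dist_zero_right] at this
      have hTw : ‖T w‖ ≤ ‖w‖ := by
        calc ‖T w‖ ≤ ‖T‖ * ‖w‖ := T.le_opNorm w
        _ = ‖w‖ := by rw [hT, one_mul]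
      have h1w : (1:ℝ) ≤ ‖T w‖ := by
        calc (1:ℝ) = g (T w) := hgw.symm
        _ ≤ ‖g (T w)‖ := le_abs_self _
        _ ≤ ‖g‖ * ‖T w‖ := g.le_opNorm _
        _ ≤ 1 * ‖T w‖ := mul_le_mul_of_nonneg_right hg (norm_nonneg _)
        _ = ‖T w‖ := one_mul _
      have hwn1 : ‖w‖ = 1 := le_antisymm hwn (le_trans h1w hTw)
      have hTw1 : ‖T w‖ = 1 := le_antisymm (hwn1 ▸ hTw) h1w
      have hw6 : w ∈ ({x₁,-x₁,x₂,-x₂,x₃,-x₃} : Set X) := by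
        rw [← hMT]; exact ⟨⟨hwn1, hTw1⟩, hw⟩
      exact hsix S h1 h2 h3 w hw6 g hg hgw
    have hb : ∀ w : X, w ∈ Set.extremePoints ℝ (Metric.closedBall (0:X) 1) →
        g (T w) ≤ 1 := by
      intro w hw
      have hwn : ‖w‖ ≤ 1 := by
        have := hw.1
        rwa [Metric.mem_closedBall, dist_zero_right] at this
      calc g (T w) ≤ ‖g (T w)‖ := le_abs_self _
      _ ≤ ‖g‖ * ‖T w‖ := g.le_opNorm _
      _ ≤ 1 * (‖T‖ * ‖w‖) :=
          mul_le_mul hg (T.le_opNorm w) (norm_nonneg _) zero_le_one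
      _ ≤ 1 := by rw [hT]; nlinarith
    have hgTp_le := hb p hpext
    have hgTq_le := hb q hqext
    have hsum : (1-t) * g (T p) + t * g (T q) = 1 := by
      rw [hveq] at hgT
      simpa [map_add, map_smul, smul_eq_mul] using hgT
    have hSv : g (S v) = (1-t) * g (S p) + t * g (S q) := by
      rw [hveq]
      simp [map_add, map_smul, smul_eq_mul]
    have hfp : (1-t) * (1 - g (T p)) = 0 := by nlinarith
    have hfq : t * (1 - g (T q)) = 0 := by nlinarith
    have hterm_p : (1-t) * g (S p) = 0 := by
      rcases mul_eq_zero.mp hfp with h | h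
      · rw [h, zero_mul]
      · have : g (T p) = 1 := by linarith
        rw [hterm p hpext this, mul_zero]
    have hterm_q : t * g (S q) = 0 := by
      rcases mul_eq_zero.mp hfq with h | h
      · rw [h, zero_mul]
      · have : g (T q) = 1 := by linarith
        rw [hterm q hqext this, mul_zero]
    rw [hSv, hterm_p, hterm_q, add_zero]
  -- every F in J(T) vanishes on admissible S (Lemma B)
  have hJzero : ∀ (S : X →L[ℝ] Y), f₁ (S x₁) = 0 → f₂ (S x₂) = 0 → f₃ (S x₃) = 0 →
      ∀ F : (X →L[ℝ] Y) →L[ℝ] ℝ, ‖F‖ = 1 → F T = 1 → F S = 0 := by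
    have half : ∀ (S : X →L[ℝ] Y),
        (∀ v : X, ‖v‖ = 1 → ∀ g : Y →L[ℝ] ℝ, ‖g‖ ≤ 1 → g (T v) = 1 → g (S v) = 0) →
        ∀ F : (X →L[ℝ] Y) →L[ℝ] ℝ, ‖F‖ = 1 → F T = 1 → F S ≤ 0 := by
      intro S hP F hFn hFT
      by_contra hpos
      push_neg at hpos
      obtain ⟨δ, hδ, hbound⟩ := deriv_bound T S hT hP (by linarith : (0:ℝ) < F S / 2)
      have h1 : F (T + δ • S) ≤ ‖T + δ • S‖ := by
        calc F (T + δ • S) ≤ ‖F (T + δ • S)‖ := le_abs_self _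
        _ ≤ ‖F‖ * ‖T + δ • S‖ := F.le_opNorm _
        _ = ‖T + δ • S‖ := by rw [hFn, one_mul]
      have h2 : F (T + δ • S) = 1 + δ * F S := by
        rw [map_add, map_smul, hFT]; simp [smul_eq_mul]
      have h3 := hbound δ hδ le_rfl
      nlinarith
    intro S h1 h2 h3 F hFn hFT
    have hP := key S h1 h2 h3
    have hP' : ∀ v : X, ‖v‖ = 1 → ∀ g : Y →L[ℝ] ℝ, ‖g‖ ≤ 1 → g (T v) = 1 →
        g ((-S) v) = 0 := by
      intro v hv g hg hgT
      have := hP v hv g hg hgT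
      rw [ContinuousLinearMap.neg_apply, map_neg]
      linarith
    have ha := half S hP F hFn hFT
    have hb := half (-S) hP' F hFn hFT
    rw [map_neg] at hb
    linarith
  -- linear independence of F₁ F₂ F₃
  have hindF : ∀ c₁ c₂ c₃ : ℝ, c₁ • F₁ + c₂ • F₂ + c₃ • F₃ = 0 →
      c₁ = 0 ∧ c₂ = 0 ∧ c₃ = 0 := by
    obtain ⟨g₁, hg1a, hg1b, hg1c⟩ := exists_functional3 hX hx1.1 hx2.1 hx3.1 h12 h12' h13 h13'
    obtain ⟨g₂, hg2a, hg2b, hg2c⟩ := exists_functional3 hX hx2.1 hx1.1 hx3.1 (Ne.symm h12)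
      (by intro h; exact h12' (by rw [h, neg_neg])) h23 h23'
    obtain ⟨g₃, hg3a, hg3b, hg3c⟩ := exists_functional3 hX hx3.1 hx1.1 hx2.1 (Ne.symm h13)
      (by intro h; exact h13' (by rw [h, neg_neg])) (Ne.symm h23)
      (by intro h; exact h23' (by rw [h, neg_neg]))
    intro c₁ c₂ c₃ hrel
    have heval : ∀ (g : X →L[ℝ] ℝ) (y : Y),
        c₁ * (g x₁ * f₁ y) + c₂ * (g x₂ * f₂ y) + c₃ * (g x₃ * f₃ y) = 0 := by
      intro g y
      have h0 := congrArg (fun F : (X →L[ℝ] Y) →L[ℝ] ℝ => F (g.smulRight y)) hrel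
      simp only [ContinuousLinearMap.add_apply, ContinuousLinearMap.coe_smul',
        Pi.smul_apply, smul_eq_mul, ContinuousLinearMap.zero_apply] at h0
      rw [hF₁app, hF₂app, hF₃app] at h0
      simp only [ContinuousLinearMap.smulRight_apply, map_smul, smul_eq_mul] at h0
      linarith
    have E1 : ∀ y : Y, c₂ * f₂ y + c₃ * g₁ x₃ * f₃ y = 0 := fun y => by
      have h0 := heval g₁ y
      rw [hg1a, hg1b] at h0
      linear_combination h0
    have E2 : ∀ y : Y, c₁ * f₁ y + c₃ * g₂ x₃ * f₃ y = 0 := fun y => by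
      have h0 := heval g₂ y
      rw [hg2a, hg2b] at h0
      linear_combination h0
    have E3 : ∀ y : Y, c₁ * f₁ y + c₂ * g₃ x₂ * f₂ y = 0 := fun y => by
      have h0 := heval g₃ y
      rw [hg3a, hg3b] at h0
      linear_combination h0
    by_cases hc1 : c₁ = 0
    · have hc2 : c₂ = 0 := by
        have h0 := E3 (T x₂)
        rw [hc1, hf₂x] at h0
        rcases mul_eq_zero.mp (by linarith : c₂ * g₃ x₂ = 0) with h | h
        · exact h
        · exact absurd h hg3c
      have hc3 : c₃ = 0 := by
        have h0 := E2 (T x₃)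
        rw [hc1, hf₃x] at h0
        rcases mul_eq_zero.mp (by linarith : c₃ * g₂ x₃ = 0) with h | h
        · exact h
        · exact absurd h hg2c
      exact ⟨hc1, hc2, hc3⟩
    · exfalso
      have hc3 : c₃ ≠ 0 := by
        intro h0
        apply hc1
        have h1 := E2 (T x₁)
        rw [h0, hf₁x] at h1
        linarith
      have hc2 : c₂ ≠ 0 := by
        intro h0
        apply hc1
        have h1 := E3 (T x₁)
        rw [h0, hf₁x] at h1
        linarith
      set μ₂ := -(c₂ * g₃ x₂)/c₁ with hμ₂
      set μ₃ := -(c₃ * g₂ x₃)/c₁ with hμ₃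
      have hf12 : ∀ y : Y, f₁ y = μ₂ * f₂ y := fun y => by
        have h0 := E3 y
        rw [hμ₂]
        field_simp
        linarith
      have hf13 : ∀ y : Y, f₁ y = μ₃ * f₃ y := fun y => by
        have h0 := E2 y
        rw [hμ₃]
        field_simp
        linarith
      have habs2 : |μ₂| = 1 := by
        have hfeq : f₁ = μ₂ • f₂ := ContinuousLinearMap.ext fun y => by
          rw [hf12 y, ContinuousLinearMap.smul_apply, smul_eq_mul]
        have h0 := congrArg norm hfeq
        have h1 := norm_smul μ₂ f₂
        rw [hf₁n, h1, hf₂n, Real.norm_eq_abs, mul_one] at h0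
        exact h0.symm
      have habs3 : |μ₃| = 1 := by
        have hfeq : f₁ = μ₃ • f₃ := ContinuousLinearMap.ext fun y => by
          rw [hf13 y, ContinuousLinearMap.smul_apply, smul_eq_mul]
        have h0 := congrArg norm hfeq
        have h1 := norm_smul μ₃ f₃
        rw [hf₁n, h1, hf₃n, Real.norm_eq_abs, mul_one] at h0
        exact h0.symm
      have hz2 : ∃ z : X, ‖z‖ = 1 ∧ z ∈ Set.extremePoints ℝ (Metric.closedBall (0:X) 1) ∧
          x₁ ≠ z ∧ f₁ (T z) = 1 ∧ (z = x₂ ∨ z = -x₂) := by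
        have hval : f₁ (T x₂) = μ₂ := by rw [hf12 (T x₂), hf₂x, mul_one]
        rcases (abs_eq zero_le_one).mp habs2 with h | h
        · exact ⟨x₂, hx2.1, hx2.2.2, h12, by rw [hval, h], Or.inl rfl⟩
        · refine ⟨-x₂, hx2'.1, hx2'.2.2, h12', ?_, Or.inr rfl⟩
          rw [map_neg, map_neg, hval, h]
          norm_num
      have hz3 : ∃ z : X, ‖z‖ = 1 ∧ z ∈ Set.extremePoints ℝ (Metric.closedBall (0:X) 1) ∧
          x₁ ≠ z ∧ f₁ (T z) = 1 ∧ (z = x₃ ∨ z = -x₃) := by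
        have hval : f₁ (T x₃) = μ₃ := by rw [hf13 (T x₃), hf₃x, mul_one]
        rcases (abs_eq zero_le_one).mp habs3 with h | h
        · exact ⟨x₃, hx3.1, hx3.2.2, h13, by rw [hval, h], Or.inl rfl⟩
        · refine ⟨-x₃, hx3'.1, hx3'.2.2, h13', ?_, Or.inr rfl⟩
          rw [map_neg, map_neg, hval, h]
          norm_num
      obtain ⟨z₂, hzn2, hze2, hzne12, hzT2, hzid2⟩ := hz2
      obtain ⟨z₃, hzn3, hze3, hzne13, hzT3, hzid3⟩ := hz3
      have hzne23 : z₂ ≠ z₃ := by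
        rcases hzid2 with rfl | rfl <;> rcases hzid3 with rfl | rfl
        · exact h23
        · exact h23'
        · exact fun h => h23' (by rw [← h, neg_neg])
        · exact fun h => h23 (neg_inj.mp h)
      exact no_common_functional hX T hT f₁ hf₁n x₁ z₂ z₃ hx1.1 hzn2 hzn3
        hx1.2.2 hze2 hze3 hzne12 hzne13 hzne23 hf₁x hzT2 hzT3
  -- a common kernel element S₀
  have hker3 : ∀ F : (X →L[ℝ] Y) →L[ℝ] ℝ,
      3 ≤ finrank ℝ (LinearMap.ker (F : (X →L[ℝ] Y) →ₗ[ℝ] ℝ)) := by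
    intro F
    have h1 := LinearMap.finrank_range_add_finrank_ker (F : (X →L[ℝ] Y) →ₗ[ℝ] ℝ)
    rw [hdimL] at h1
    have h2 : finrank ℝ (LinearMap.range (F : (X →L[ℝ] Y) →ₗ[ℝ] ℝ)) ≤ 1 := by
      have h3 := Submodule.finrank_le (LinearMap.range (F : (X →L[ℝ] Y) →ₗ[ℝ] ℝ))
      rwa [Module.finrank_self] at h3
    omega
  have hinter : ∀ p q : Submodule ℝ (X →L[ℝ] Y),
      finrank ℝ p + finrank ℝ q - 4 ≤ finrank ℝ ↥(p ⊓ q) := by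
    intro p q
    have h1 := Submodule.finrank_sup_add_finrank_inf_eq p q
    have h2 : finrank ℝ ↥(p ⊔ q) ≤ 4 := by
      have h3 := Submodule.finrank_le (p ⊔ q)
      rwa [hdimL] at h3
    omega
  obtain ⟨S₀, hS₀K, hS₀ne⟩ : ∃ S₀ : X →L[ℝ] Y,
      S₀ ∈ (LinearMap.ker (F₁ : (X →L[ℝ] Y) →ₗ[ℝ] ℝ) ⊓
        LinearMap.ker (F₂ : (X →L[ℝ] Y) →ₗ[ℝ] ℝ)) ⊓
        LinearMap.ker (F₃ : (X →L[ℝ] Y) →ₗ[ℝ] ℝ) ∧ S₀ ≠ 0 := by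
    apply Submodule.exists_mem_ne_zero_of_ne_bot
    intro hbot
    have h1 := hinter (LinearMap.ker (F₁ : (X →L[ℝ] Y) →ₗ[ℝ] ℝ))
      (LinearMap.ker (F₂ : (X →L[ℝ] Y) →ₗ[ℝ] ℝ))
    have h2 := hinter (LinearMap.ker (F₁ : (X →L[ℝ] Y) →ₗ[ℝ] ℝ) ⊓
      LinearMap.ker (F₂ : (X →L[ℝ] Y) →ₗ[ℝ] ℝ)) (LinearMap.ker (F₃ : (X →L[ℝ] Y) →ₗ[ℝ] ℝ))
    have h3 := hker3 F₁
    have h4 := hker3 F₂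
    have h5 := hker3 F₃
    have h6 : finrank ℝ ↥((LinearMap.ker (F₁ : (X →L[ℝ] Y) →ₗ[ℝ] ℝ) ⊓
        LinearMap.ker (F₂ : (X →L[ℝ] Y) →ₗ[ℝ] ℝ)) ⊓
        LinearMap.ker (F₃ : (X →L[ℝ] Y) →ₗ[ℝ] ℝ)) = 0 := by
      rw [hbot, finrank_bot]
    have h7 : finrank ℝ (LinearMap.ker (F₁ : (X →L[ℝ] Y) →ₗ[ℝ] ℝ)) ≤ 4 := by
      have := Submodule.finrank_le (LinearMap.ker (F₁ : (X →L[ℝ] Y) →ₗ[ℝ] ℝ))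
      rwa [hdimL] at this
    have h8 : finrank ℝ (LinearMap.ker (F₂ : (X →L[ℝ] Y) →ₗ[ℝ] ℝ)) ≤ 4 := by
      have := Submodule.finrank_le (LinearMap.ker (F₂ : (X →L[ℝ] Y) →ₗ[ℝ] ℝ))
      rwa [hdimL] at this
    omega
  obtain ⟨⟨hS₀1, hS₀2⟩, hS₀3⟩ := hS₀K
  have hS1 : f₁ (S₀ x₁) = 0 := by
    have h0 := LinearMap.mem_ker.mp hS₀1
    rw [ContinuousLinearMap.coe_coe, hF₁app] at h0
    exact h0
  have hS2 : f₂ (S₀ x₂) = 0 := by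
    have h0 := LinearMap.mem_ker.mp hS₀2
    rw [ContinuousLinearMap.coe_coe, hF₂app] at h0
    exact h0
  have hS3 : f₃ (S₀ x₃) = 0 := by
    have h0 := LinearMap.mem_ker.mp hS₀3
    rw [ContinuousLinearMap.coe_coe, hF₃app] at h0
    exact h0
  -- evaluation functional at S₀
  set ev : ((X →L[ℝ] Y) →L[ℝ] ℝ) →ₗ[ℝ] ℝ :=
    { toFun := fun F => F S₀,
      map_add' := fun F G => rfl,
      map_smul' := fun c F => rfl } with hevdef
  have hkerev : finrank ℝ (LinearMap.ker ev) ≤ 3 := by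
    have h1 := LinearMap.finrank_range_add_finrank_ker ev
    rw [hdimD] at h1
    have h2 : 1 ≤ finrank ℝ (LinearMap.range ev) := by
      obtain ⟨G, hGn, hGe⟩ := exists_dual_vector ℝ S₀ (norm_ne_zero_iff.mpr hS₀ne)
      have hGne : ev G ≠ 0 := by
        have h3 : ev G = G S₀ := rfl
        rw [h3, hGe]
        exact_mod_cast norm_ne_zero_iff.mpr hS₀ne
      by_contra hlt
      push_neg at hlt
      have h0 : finrank ℝ (LinearMap.range ev) = 0 := by omega
      rw [Submodule.finrank_eq_zero] at h0
      apply hGne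
      have h4 : ev G ∈ LinearMap.range ev := LinearMap.mem_range_self ev G
      rw [h0] at h4
      simpa using h4
    omega
  have hsub2 : Submodule.span ℝ {F : (X →L[ℝ] Y) →L[ℝ] ℝ | ‖F‖ = 1 ∧ F T = 1}
      ≤ LinearMap.ker ev := by
    rw [Submodule.span_le]
    intro F hF
    have h0 := hJzero S₀ hS1 hS2 hS3 F hF.1 hF.2
    exact LinearMap.mem_ker.mpr h0
  have hli3 : LinearIndependent ℝ ![F₁, F₂, F₃] := by
    rw [Fintype.linearIndependent_iff]
    intro gc hsum i
    have h0 : gc 0 • F₁ + gc 1 • F₂ + gc 2 • F₃ = 0 := by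
      rw [Fin.sum_univ_three] at hsum
      simpa using hsum
    obtain ⟨e0, e1, e2⟩ := hindF _ _ _ h0
    fin_cases i
    · exact e0
    · exact e1
    · exact e2
  have hsub1 : Submodule.span ℝ (Set.range ![F₁, F₂, F₃])
      ≤ Submodule.span ℝ {F : (X →L[ℝ] Y) →L[ℝ] ℝ | ‖F‖ = 1 ∧ F T = 1} := by
    apply Submodule.span_mono
    rintro F ⟨i, rfl⟩
    fin_cases i
    · exact ⟨hF₁n, hF₁T⟩
    · exact ⟨hF₂n, hF₂T⟩
    · exact ⟨hF₃n, hF₃T⟩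
  have hsp3 : finrank ℝ (Submodule.span ℝ (Set.range ![F₁, F₂, F₃])) = 3 := by
    rw [finrank_span_eq_card hli3]
    simp
  have hge := Submodule.finrank_mono hsub1
  have hle := Submodule.finrank_mono hsub2
  rw [hsp3] at hge
  have hfin := le_trans hle hkerev
  omega
end

section
/- Let X be an n-dimensional polyhedral real Banach space. If x is an exposed point of the closed unit ball of X, then x is n-smooth, i.e., dim span J(x) = n. -/
open Metric Set

/-- A functional bounded by 1 on the unit ball and attaining value 1 at a unit vector
has norm 1. -/
lemma aux_norm_one {X : Type*} [NormedAddCommGroup X] [NormedSpace ℝ X]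
    (f : X →L[ℝ] ℝ) (x : X) (hx : ‖x‖ = 1) (hfx : f x = 1)
    (hb : ∀ y ∈ Metric.closedBall (0 : X) 1, f y ≤ 1) : ‖f‖ = 1 := by
  have hle : ∀ y : X, f y ≤ ‖y‖ := by
    intro y
    rcases eq_or_ne y 0 with rfl | hy
    · simp
    · have hny : (0:ℝ) < ‖y‖ := norm_pos_iff.2 hy
      have hz : (‖y‖⁻¹ • y) ∈ Metric.closedBall (0 : X) 1 := by
        simp [norm_smul, abs_of_pos (inv_pos.2 hny), inv_mul_cancel₀ hny.ne']
      have := hb _ hz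
      rw [map_smul] at this
      have : ‖y‖ * (‖y‖⁻¹ * f y) ≤ ‖y‖ * 1 := by
        exact mul_le_mul_of_nonneg_left this hny.le
      rwa [← mul_assoc, mul_inv_cancel₀ hny.ne', one_mul, mul_one] at this
  have h1 : ‖f‖ ≤ 1 := by
    refine f.opNorm_le_bound zero_le_one fun y => ?_
    rw [one_mul, Real.norm_eq_abs, abs_le]
    constructor
    · have h' := hle (-y); rw [map_neg, norm_neg] at h'; linarith
    · exact hle y
  have h2 : 1 ≤ ‖f‖ := by
    have := f.le_opNorm x
    rw [hfx, hx, mul_one] at this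
    simpa using this
  linarith

theorem stmt16 (X : Type*) [NormedAddCommGroup X] [NormedSpace ℝ X]
    (n : ℕ) (hX : Module.finrank ℝ X = n)
    (hpoly : ∃ s : Finset X, Metric.closedBall (0 : X) 1 = convexHull ℝ (↑s : Set X))
    (x : X)
    (hexp : ∃ f : X →L[ℝ] ℝ, f x = 1 ∧ ∀ y ∈ Metric.closedBall (0 : X) 1, y ≠ x → f y < 1)
    (hx : ‖x‖ = 1) :
    Module.finrank ℝ ↥(Submodule.span ℝ
      {f : X →L[ℝ] ℝ | ‖f‖ = 1 ∧ f x = 1}) = n := by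
  classical
  obtain ⟨s, hs⟩ := hpoly
  obtain ⟨g, hgx, hg⟩ := hexp
  -- finite dimensionality
  haveI : FiniteDimensional ℝ X := by
    refine FiniteDimensional.of_isCompact_closedBall₀ ℝ (one_pos) ?_
    rw [hs]
    exact (s.finite_toSet).isCompact_convexHull (𝕜 := ℝ)
  have hxball : x ∈ Metric.closedBall (0 : X) 1 := by simp [hx]
  have hsub : (↑s : Set X) ⊆ Metric.closedBall (0 : X) 1 := by
    rw [hs]; exact subset_convexHull ℝ _
  -- bound on hull from bound on s
  have hull_bound : ∀ (f : X →L[ℝ] ℝ) (c : ℝ), (∀ y ∈ s, f y ≤ c) →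
      ∀ y ∈ Metric.closedBall (0 : X) 1, f y ≤ c := by
    intro f c hfs y hy
    rw [hs] at hy
    have : convexHull ℝ (↑s : Set X) ⊆ {z | f z ≤ c} :=
      convexHull_min (fun z hz => hfs z hz) (convex_halfSpace_le ⟨f.map_add, f.map_smul⟩ c)
    exact this hy
  have hgball : ∀ y ∈ Metric.closedBall (0 : X) 1, g y ≤ 1 := by
    intro y hy
    rcases eq_or_ne y x with rfl | hyx
    · exact le_of_eq hgx
    · exact (hg y hy hyx).le
  have hgnorm : ‖g‖ = 1 := aux_norm_one g x hx hgx hgball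
  -- the set J(x)
  set J : Set (X →L[ℝ] ℝ) := {f : X →L[ℝ] ℝ | ‖f‖ = 1 ∧ f x = 1} with hJ
  have hgJ : g ∈ J := ⟨hgnorm, hgx⟩
  -- erase x from s; nonempty
  have hne : (s.erase x).Nonempty := by
    by_contra hemp
    rw [Finset.not_nonempty_iff_eq_empty] at hemp
    have hsx : (↑s : Set X) ⊆ {x} := by
      intro y hy
      rcases eq_or_ne y x with rfl | hyx
      · rfl
      · exact absurd (Finset.mem_erase.2 ⟨hyx, hy⟩) (by simp [hemp])
    have : Metric.closedBall (0 : X) 1 ⊆ {x} := by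
      rw [hs]
      refine convexHull_min hsx (convex_singleton x)
    have h0 : (0 : X) ∈ Metric.closedBall (0 : X) 1 := by simp
    have := this h0
    simp only [Set.mem_singleton_iff] at this
    rw [← this] at hx
    simp at hx
  -- the gap δ
  set m : ℝ := (s.erase x).sup' hne (fun y => g y) with hm
  have hmlt : m < 1 := by
    rw [hm, Finset.sup'_lt_iff]
    intro y hy
    have hyx := (Finset.mem_erase.1 hy).1
    exact hg y (hsub (Finset.mem_erase.1 hy).2) hyx
  set δ : ℝ := 1 - m with hδ
  have hδpos : 0 < δ := by simp [hδ]; linarith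
  -- span J = ⊤
  have hspan : Submodule.span ℝ J = ⊤ := by
    rw [Submodule.eq_top_iff']
    intro h
    rcases eq_or_ne h 0 with rfl | hh0
    · exact Submodule.zero_mem _
    set ε : ℝ := min (δ / (‖h‖ + |h x| + 1)) (1 / (|h x| + 1)) with hε
    have hden : (0:ℝ) < ‖h‖ + |h x| + 1 := by positivity
    have hden2 : (0:ℝ) < |h x| + 1 := by positivity
    have hεpos : 0 < ε := lt_min (div_pos hδpos hden) (div_pos one_pos hden2)
    have hε1 : ε * (‖h‖ + |h x|) < δ := by
      have h1 : ε ≤ δ / (‖h‖ + |h x| + 1) := min_le_left _ _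
      have : ε * (‖h‖ + |h x|) < ε * (‖h‖ + |h x| + 1) := by
        have := mul_lt_mul_of_pos_left (by linarith : ‖h‖ + |h x| < ‖h‖ + |h x| + 1) hεpos
        linarith
      calc ε * (‖h‖ + |h x|) < ε * (‖h‖ + |h x| + 1) := this
        _ ≤ (δ / (‖h‖ + |h x| + 1)) * (‖h‖ + |h x| + 1) :=
            mul_le_mul_of_nonneg_right h1 (by positivity)
        _ = δ := by field_simp
    have hε2 : ε * |h x| < 1 := by
      have h1 : ε ≤ 1 / (|h x| + 1) := min_le_right _ _
      calc ε * |h x| ≤ (1 / (|h x| + 1)) * |h x| :=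
            mul_le_mul_of_nonneg_right h1 (abs_nonneg _)
        _ < 1 := by rw [div_mul_eq_mul_div, one_mul, div_lt_one hden2]; linarith
    have habs : -(ε * |h x|) ≤ ε * h x := by
      rw [neg_mul_eq_mul_neg]
      exact mul_le_mul_of_nonneg_left (neg_abs_le _) hεpos.le
    set c : ℝ := 1 + ε * h x with hc
    have hcpos : 0 < c := by
      rw [hc]; linarith
    set f : X →L[ℝ] ℝ := c⁻¹ • (g + ε • h) with hf
    have hfx : f x = 1 := by
      simp only [hf, ContinuousLinearMap.smul_apply, ContinuousLinearMap.add_apply,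
        ContinuousLinearMap.smul_apply, hgx, smul_eq_mul]
      field_simp [hc]
      exact hc.symm
    -- bound on s
    have hfs : ∀ y ∈ s, (g + ε • h) y ≤ c := by
      intro y hy
      rcases eq_or_ne y x with rfl | hyx
      · simp [hc, hgx]
      · have hym : y ∈ s.erase x := Finset.mem_erase.2 ⟨hyx, hy⟩
        have hgy : g y ≤ m := Finset.le_sup' (fun z => g z) hym
        have hhy : ε * h y ≤ ε * ‖h‖ := by
          have h1 : h y ≤ |h y| := le_abs_self _
          have h2 : |h y| ≤ ‖h‖ * ‖y‖ := by
            have := h.le_opNorm y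
            simpa using this
          have hy1 : ‖y‖ ≤ 1 := by
            have := hsub hy
            simpa using this
          have h3 : ‖h‖ * ‖y‖ ≤ ‖h‖ * 1 := mul_le_mul_of_nonneg_left hy1 (norm_nonneg h)
          have : h y ≤ ‖h‖ := by rw [mul_one] at h3; linarith
          exact mul_le_mul_of_nonneg_left this hεpos.le
        have hε1' : ε * ‖h‖ + ε * |h x| < δ := by rw [← mul_add]; exact hε1
        simp only [ContinuousLinearMap.add_apply, ContinuousLinearMap.smul_apply,
          smul_eq_mul, hc]
        have hδm : δ = 1 - m := hδ
        linarith
    have hfball : ∀ y ∈ Metric.closedBall (0 : X) 1, f y ≤ 1 := by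
      intro y hy
      have := hull_bound (g + ε • h) c hfs y hy
      simp only [hf, ContinuousLinearMap.smul_apply, smul_eq_mul]
      rw [inv_mul_le_iff₀ hcpos, mul_one]
      exact this
    have hfJ : f ∈ J := ⟨aux_norm_one f x hx hfx hfball, hfx⟩
    -- h = ε⁻¹ • (c • f - g)
    have key : h = ε⁻¹ • (c • f - g) := by
      have : c • f = g + ε • h := by
        rw [hf, smul_smul, mul_inv_cancel₀ hcpos.ne', one_smul]
      rw [this]
      simp [smul_smul, inv_mul_cancel₀ hεpos.ne']
    rw [key]
    exact Submodule.smul_mem _ _ (Submodule.sub_mem _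
      (Submodule.smul_mem _ _ (Submodule.subset_span hfJ))
      (Submodule.subset_span hgJ))
  rw [hspan, finrank_top]
  rw [show Module.finrank ℝ (X →L[ℝ] ℝ) = Module.finrank ℝ (X →ₗ[ℝ] ℝ) from
    (LinearMap.toContinuousLinearMap (𝕜 := ℝ) (E := X) (F' := ℝ)).symm.finrank_eq]
  rw [Module.finrank_linearMap, Module.finrank_self, mul_one, hX]
end
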